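/- Let V be a pseudovariety of semigroups closed under two-sided Karnofsky–Rhodes expansion, and let (S_i)_{i∈I} be a nonempty family of pro-V semigroups each of which is a KR-cover. Then the V-coproduct ∐^V_{i∈I} S_i is a KR-cover. -/

import Mathlib

set_option autoImplicit false

/-! ### General notions: topological semigroups, pseudovarieties, pro-V semigroups -/

/-- Continuity of a map into a type regarded with the discrete topology. -/
def ContinuousDisc {S : Type} [TopologicalSpace S] {T : Type} (f : S → T) : Prop :=
  @Continuous S T _ ⊥ f

/-- A pseudovariety of semigroups: a class of finite semigroups closed under
homomorphic images, subsemigroups and finite direct products. -/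
structure Pseudovariety : Type 1 where
  Mem : ∀ (S : Type) [Semigroup S], Prop
  finite : ∀ (S : Type) [Semigroup S], Mem S → Finite S
  closed_hom : ∀ (S T : Type) [Semigroup S] [Semigroup T] (f : S →ₙ* T),
    Mem S → Function.Surjective f → Mem T
  closed_sub : ∀ (S T : Type) [Semigroup S] [Semigroup T] (f : T →ₙ* S),
    Mem S → Function.Injective f → Mem T
  closed_prod : ∀ (ι : Type) [Finite ι] (S : ι → Type) [∀ i, Semigroup (S i)],
    (∀ i, Mem (S i)) → Mem (∀ i, S i)

/-- A bundled member of a pseudovariety `V` (a finite semigroup belonging to `V`),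
always regarded as carrying the discrete topology. -/
structure SgrIn (V : Pseudovariety) : Type 1 where
  carrier : Type
  [str : Semigroup carrier]
  mem : V.Mem carrier

attribute [instance] SgrIn.str

/-- A (bundled) topological semigroup. -/
structure TopSgr : Type 1 where
  carrier : Type
  [str : Semigroup carrier]
  [top : TopologicalSpace carrier]

attribute [instance] TopSgr.str TopSgr.top

/-- A finite semigroup regarded as a topological semigroup with the discrete topology. -/
def discTopSgr (S : Type) [Semigroup S] : TopSgr :=
  @TopSgr.mk S _ ⊥

/-- A pro-V semigroup: a compact Hausdorff topological semigroup that is residually `V`. -/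
def IsProV (V : Pseudovariety) (S : TopSgr) : Prop :=
  CompactSpace S.carrier ∧ T2Space S.carrier ∧ ContinuousMul S.carrier ∧
    ∀ x y : S.carrier, x ≠ y → ∃ (F : SgrIn V) (f : S.carrier →ₙ* F.carrier),
      ContinuousDisc ⇑f ∧ f x ≠ f y

/-- A profinite semigroup: a compact Hausdorff totally disconnected topological semigroup. -/
def IsProfiniteSgr (S : TopSgr) : Prop :=
  CompactSpace S.carrier ∧ T2Space S.carrier ∧ TotallyDisconnectedSpace S.carrier ∧
    ContinuousMul S.carrier

/-- `C`, together with the continuous homomorphisms `φ i`, is a `V`-coproduct of the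
family `S` of pro-`V` semigroups. -/
structure IsCoproduct (V : Pseudovariety) {I : Type} (S : I → TopSgr)
    (C : TopSgr) (φ : ∀ i, (S i).carrier →ₙ* C.carrier) : Prop where
  proV : IsProV V C
  cont : ∀ i, Continuous ⇑(φ i)
  universal : ∀ (T : TopSgr), IsProV V T →
    ∀ ψ : ∀ i, (S i).carrier →ₙ* T.carrier, (∀ i, Continuous ⇑(ψ i)) →
      ∃! Ψ : C.carrier →ₙ* T.carrier, Continuous ⇑Ψ ∧ ∀ i, Ψ.comp (φ i) = ψ i

/-- `P`, together with the homomorphisms `e i`, is a free product (coproduct in the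
category of semigroups) of the family `S`. -/
structure IsFreeProduct {I : Type} (S : I → Type) [∀ i, Semigroup (S i)]
    (P : Type) [Semigroup P] (e : ∀ i, S i →ₙ* P) : Prop where
  universal : ∀ (T : Type) [Semigroup T] (f : ∀ i, S i →ₙ* T),
    ∃! F : P →ₙ* T, ∀ i, F.comp (e i) = f i

/-! ### Particular pseudovarieties and related notions -/

/-- `V` contains the pseudovariety `Sl` of finite semilattices. -/
def ContainsSl (V : Pseudovariety) : Prop :=
  ∀ (S : Type) [Semigroup S] [Finite S],
    (∀ x y : S, x * y = y * x) → (∀ x : S, x * x = x) → V.Mem S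

/-- Green's `J`-preorder: `s ≤_J t`, i.e. `s ∈ S^I t S^I`. -/
def JBelow {S : Type} [Semigroup S] (s t : S) : Prop :=
  ∃ x y : WithOne S, x * (t : WithOne S) * y = (s : WithOne S)

/-- `V` contains the pseudovariety `J` of finite `J`-trivial semigroups. -/
def ContainsJ (V : Pseudovariety) : Prop :=
  ∀ (S : Type) [Semigroup S] [Finite S],
    (∀ s t : S, JBelow s t → JBelow t s → s = t) → V.Mem S

/-- The preimage of an idempotent under a semigroup homomorphism, as a subsemigroup. -/
def fiberSub {S T : Type} [Semigroup S] [Semigroup T] (ψ : S →ₙ* T) (e : T)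
    (he : e * e = e) : Subsemigroup S where
  carrier := ⇑ψ ⁻¹' {e}
  mul_mem' := by
    intro a b ha hb
    simp only [Set.mem_preimage, Set.mem_singleton_iff] at *
    rw [map_mul, ha, hb, he]

/-- The set of products of `n+1` elements of a semigroup (so `nthProds S 0 = S`). -/
def nthProds (S : Type) [Semigroup S] : ℕ → Set S
  | 0 => Set.univ
  | n + 1 => {x | ∃ a y, y ∈ nthProds S n ∧ x = a * y}

/-- A nilpotent semigroup: it has a zero `z` and some power of the semigroup is `{z}`. -/
def IsNilpotentSgr (S : Type) [Semigroup S] : Prop :=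
  ∃ z : S, (∀ x : S, z * x = z ∧ x * z = z) ∧ ∃ n : ℕ, nthProds S n ⊆ {z}

/-- A generator of the Mal'cev product `N ⓜ V`: a finite semigroup admitting a surjective
homomorphism onto a member of `V` all of whose idempotent fibers are nilpotent. -/
def NMalcevGen (V : Pseudovariety) (S : Type) [Semigroup S] : Prop :=
  Finite S ∧ ∃ (T : SgrIn V) (ψ : S →ₙ* T.carrier), Function.Surjective ψ ∧
    ∀ (e : T.carrier) (he : e * e = e), IsNilpotentSgr (fiberSub ψ e he)

/-- The equality `N ⓜ V = V`: `V` coincides with the smallest pseudovariety containing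
all finite semigroups admitting an `N`-morphism onto some member of `V`. -/
def NMalcevFixed (V : Pseudovariety) : Prop :=
  ∀ (S : Type) [Semigroup S] [Finite S],
    V.Mem S ↔ ∀ U : Pseudovariety,
      (∀ (S' : Type) [Semigroup S'], NMalcevGen V S' → U.Mem S') → U.Mem S

/-- A completely simple semigroup: simple with a primitive idempotent. -/
def IsCompletelySimple (S : Type) [Semigroup S] : Prop :=
  (∀ J : Set S, J.Nonempty → (∀ s x : S, x ∈ J → s * x ∈ J ∧ x * s ∈ J) → J = Set.univ) ∧
  ∃ e : S, e * e = e ∧ ∀ f : S, f * f = f → e * f = f → f * e = f → f = e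

/-- An equidivisible semigroup. -/
def Equidivisible (S : Type) [Semigroup S] : Prop :=
  ∀ u v x y : S, u * v = x * y →
    ∃ t : WithOne S,
      ((x : WithOne S) = (u : WithOne S) * t ∧ t * (y : WithOne S) = (v : WithOne S)) ∨
      ((x : WithOne S) * t = (u : WithOne S) ∧ (y : WithOne S) = t * (v : WithOne S))

/-! ### The two-sided Karnofsky–Rhodes expansion -/

/-- Vertices of the two-sided Cayley graph of `T`: pairs of elements of `T^I`. -/
abbrev KRVtx (T : Type) : Type := WithOne T × WithOne T

/-- Edges of the two-sided Cayley graph: (source, label, target). -/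
abbrev KREdge (A T : Type) : Type := KRVtx T × A × KRVtx T

/-- The image in `T^I` of a letter. -/
def letterImg {A T : Type} [Semigroup T] (ψ : FreeSemigroup A →ₙ* T) (a : A) : WithOne T :=
  (ψ (FreeSemigroup.of a) : WithOne T)

/-- The image in `T^I` of a (possibly empty) word. -/
def wordImg {A T : Type} [Semigroup T] (ψ : FreeSemigroup A →ₙ* T) (w : List A) : WithOne T :=
  (w.map (letterImg ψ)).prod

/-- `e` is an edge of the two-sided Cayley graph `Γ_ψ`. -/
def IsKREdge {A T : Type} [Semigroup T] (ψ : FreeSemigroup A →ₙ* T) (e : KREdge A T) : Prop :=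
  e.1.1 * letterImg ψ e.2.1 = e.2.2.1 ∧ e.1.2 = letterImg ψ e.2.1 * e.2.2.2

/-- One step along an edge of `Γ_ψ` (used to define directed paths). -/
def KRStep {A T : Type} [Semigroup T] (ψ : FreeSemigroup A →ₙ* T) (v w : KRVtx T) : Prop :=
  ∃ a : A, v.1 * letterImg ψ a = w.1 ∧ v.2 = letterImg ψ a * w.2

/-- A transition edge of `Γ_ψ`: an edge from whose target there is no directed path
back to its source. -/
def IsTransEdge {A T : Type} [Semigroup T] (ψ : FreeSemigroup A →ₙ* T) (e : KREdge A T) : Prop :=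
  IsKREdge ψ e ∧ ¬ Relation.ReflTransGen (KRStep ψ) e.2.2 e.1

/-- The list of letters of an element of the free semigroup. -/
def letters {A : Type} (u : FreeSemigroup A) : List A := u.head :: u.tail

/-- The set of edges of the path `p_u` of `Γ_ψ` from `(I, ψ u)` to `(ψ u, I)` labeled by `u`. -/
def pathEdges {A T : Type} [Semigroup T] (ψ : FreeSemigroup A →ₙ* T) (u : FreeSemigroup A) :
    Set (KREdge A T) :=
  {e | ∃ (w₁ w₂ : List A) (a : A), letters u = w₁ ++ a :: w₂ ∧
    e = ((wordImg ψ w₁, wordImg ψ (a :: w₂)), a, (wordImg ψ (w₁ ++ [a]), wordImg ψ w₂))}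

/-- The set `T(p_u)` of transition edges of `Γ_ψ` occurring in the path `p_u`. -/
def transEdges {A T : Type} [Semigroup T] (ψ : FreeSemigroup A →ₙ* T) (u : FreeSemigroup A) :
    Set (KREdge A T) :=
  {e ∈ pathEdges ψ u | IsTransEdge ψ e}

/-- A realization of the two-sided Karnofsky–Rhodes expansion of `ψ : A⁺ → T`:
a semigroup `K = T_ψ^KR` together with the projection `ψ^KR : A⁺ → K`, which is onto and
identifies `u` and `v` exactly when `ψ u = ψ v` and `T(p_u) = T(p_v)`, and the canonical
homomorphism `π : T_ψ^KR → T` with `π ∘ ψ^KR = ψ`. -/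
structure KRExp {A T : Type} [Semigroup T] (ψ : FreeSemigroup A →ₙ* T) : Type 1 where
  K : Type
  [strK : Semigroup K]
  [finK : Finite K]
  ψKR : FreeSemigroup A →ₙ* K
  π : K →ₙ* T
  surj : Function.Surjective ⇑ψKR
  ker : ∀ u v : FreeSemigroup A, ψKR u = ψKR v ↔
    (ψ u = ψ v ∧ transEdges ψ u = transEdges ψ v)
  proj : π.comp ψKR = ψ

attribute [instance] KRExp.strK KRExp.finK

/-- The data of a two-sided Karnofsky–Rhodes expansion of a finite semigroup `T`:
a finite alphabet `A`, an onto homomorphism `ψ : A⁺ → T`, and a realization `T_ψ^KR`. -/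
structure KRData (T : Type) [Semigroup T] : Type 1 where
  A : Type
  [finA : Finite A]
  ψ : FreeSemigroup A →ₙ* T
  surjψ : Function.Surjective ⇑ψ
  E : KRExp ψ

attribute [instance] KRData.finA

/-- `V` is closed under two-sided Karnofsky–Rhodes expansion. -/
def ClosedUnderKR (V : Pseudovariety) : Prop :=
  ∀ (A T : Type) [Finite A] [Semigroup T], V.Mem T →
    ∀ (ψ : FreeSemigroup A →ₙ* T), Function.Surjective ⇑ψ →
      ∀ E : KRExp ψ, V.Mem E.K

/-! ### KR-covers -/

/-- `S` is a KR-cover of the finite semigroup `T`. -/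
def IsKRCoverOf (S : TopSgr) (T : Type) [Semigroup T] [Finite T] : Prop :=
  (∃ φ : S.carrier →ₙ* T, ContinuousDisc ⇑φ ∧ Function.Surjective ⇑φ) ∧
  ∀ φ : S.carrier →ₙ* T, ContinuousDisc ⇑φ → Function.Surjective ⇑φ →
    ∃ (D : KRData T) (φψ : S.carrier →ₙ* D.E.K),
      ContinuousDisc ⇑φψ ∧ D.E.π.comp φψ = φ

/-- `S` is a KR-cover: a KR-cover of each of its finite continuous homomorphic images. -/
def IsKRCover (S : TopSgr) : Prop :=
  ∀ (T : Type) [Semigroup T] [Finite T],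
    (∃ φ : S.carrier →ₙ* T, ContinuousDisc ⇑φ ∧ Function.Surjective ⇑φ) →
    IsKRCoverOf S T

/-- `S` is `V`-projective. -/
def IsVProjective (V : Pseudovariety) (S : TopSgr) : Prop :=
  IsProV V S ∧ ∀ (T R : TopSgr), IsProV V T → IsProV V R →
    ∀ (f : S.carrier →ₙ* T.carrier) (g : R.carrier →ₙ* T.carrier),
      Continuous ⇑f → Continuous ⇑g → Function.Surjective ⇑g →
        ∃ f' : S.carrier →ₙ* R.carrier, Continuous ⇑f' ∧ g.comp f' = f

/-! ### Strong KR-covers and letter super-cancellativity -/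

/-- `κ : A → S` is a generating mapping: its image generates a dense subsemigroup. -/
def GeneratingMap {A : Type} (S : TopSgr) (κ : A → S.carrier) : Prop :=
  Dense (Subsemigroup.closure (Set.range κ) : Set S.carrier)

/-- The homomorphism `A⁺ → T` extending `a ↦ φ (κ a)`. -/
def liftGen {A : Type} (S : TopSgr) (κ : A → S.carrier) {T : Type} [Semigroup T]
    (φ : S.carrier →ₙ* T) : FreeSemigroup A →ₙ* T :=
  FreeSemigroup.lift (fun a => φ (κ a))

/-- `S` is a strong KR-cover of the finite semigroup `T` with respect to the
generating mapping `κ`. -/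
def IsStrongKRCoverOfWrt {A : Type} (S : TopSgr) (κ : A → S.carrier)
    (T : Type) [Semigroup T] [Finite T] : Prop :=
  ∀ φ : S.carrier →ₙ* T, ContinuousDisc ⇑φ → Function.Surjective ⇑φ →
    ∃ (E : KRExp (liftGen S κ φ)) (φκ : S.carrier →ₙ* E.K),
      ContinuousDisc ⇑φκ ∧ E.π.comp φκ = φ ∧
      ∀ a : A, φκ (κ a) = E.ψKR (FreeSemigroup.of a)

/-- `S` is a strong KR-cover of the finite semigroup `T` (with respect to some
generating mapping with finite domain). -/
def IsStrongKRCoverOf (S : TopSgr) (T : Type) [Semigroup T] [Finite T] : Prop :=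
  ∃ A : Type, Finite A ∧ ∃ κ : A → S.carrier, GeneratingMap S κ ∧
    IsStrongKRCoverOfWrt S κ T

/-- `S` is a strong KR-cover: a strong KR-cover of each of its finite continuous
homomorphic images. -/
def IsStrongKRCover (S : TopSgr) : Prop :=
  ∀ (T : Type) [Semigroup T] [Finite T],
    (∃ φ : S.carrier →ₙ* T, ContinuousDisc ⇑φ ∧ Function.Surjective ⇑φ) →
    IsStrongKRCoverOf S T

/-- `S` is letter super-cancellative with respect to the subset `A` of `S`. -/
def IsLSC (S : TopSgr) (A : Set S.carrier) : Prop :=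
  ∀ a ∈ A, ∀ b ∈ A, ∀ u v : WithOne S.carrier,
    (u * (a : WithOne S.carrier) = v * (b : WithOne S.carrier) → a = b ∧ u = v) ∧
    ((a : WithOne S.carrier) * u = (b : WithOne S.carrier) * v → a = b ∧ u = v)

/-! ### `S^I` and inverse limits -/

/-- The sum topology on `S^I = S ∪ {I}`: the point `I` is isolated and `S` keeps
its topology. -/
def withOneTopology (S : Type) [TopologicalSpace S] : TopologicalSpace (WithOne S) where
  IsOpen V := IsOpen ((fun s : S => (s : WithOne S)) ⁻¹' V)
  isOpen_univ := by simp
  isOpen_inter := by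
    intro U V hU hV
    rw [Set.preimage_inter]
    exact hU.inter hV
  isOpen_sUnion := by
    intro s hs
    rw [Set.preimage_sUnion]
    exact isOpen_biUnion hs

/-- `S^I` as a topological semigroup (in fact a monoid): `S` with an isolated identity
adjoined. -/
def withOneTopSgr (S : TopSgr) : TopSgr :=
  @TopSgr.mk (WithOne S.carrier) _ (withOneTopology S.carrier)

/-- The inverse limit of a family of topological semigroups, as a subsemigroup of
the product. -/
def invLimSub {I : Type} [Preorder I] (S : I → TopSgr)
    (f : ∀ i j, j ≤ i → ((S i).carrier →ₙ* (S j).carrier)) :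
    Subsemigroup (∀ i, (S i).carrier) where
  carrier := {x | ∀ i j (h : j ≤ i), f i j h (x i) = x j}
  mul_mem' := by
    intro a b ha hb i j h
    simp only [Pi.mul_apply, map_mul, ha i j h, hb i j h]

/-- The inverse limit as a topological semigroup (with the topology induced from the
product topology). -/
def invLimTopSgr {I : Type} [Preorder I] (S : I → TopSgr)
    (f : ∀ i j, j ≤ i → ((S i).carrier →ₙ* (S j).carrier)) : TopSgr :=
  TopSgr.mk (invLimSub S f)
/-! ### Auxiliary development for Statement 16 -/

section KRCombinatorics

open FreeSemigroup Relation

variable {A T : Type} [Semigroup T] (ψ : FreeSemigroup A →ₙ* T)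

theorem wordImg_nil : wordImg ψ ([] : List A) = 1 := rfl

theorem wordImg_cons (a : A) (l : List A) :
    wordImg ψ (a :: l) = letterImg ψ a * wordImg ψ l := by
  simp [wordImg]

theorem wordImg_append (l₁ l₂ : List A) :
    wordImg ψ (l₁ ++ l₂) = wordImg ψ l₁ * wordImg ψ l₂ := by
  simp [wordImg]

theorem letters_of (a : A) : letters (of a) = [a] := rfl

theorem letters_mul (u v : FreeSemigroup A) :
    letters (u * v) = letters u ++ letters v := by
  simp [letters, head_mul, tail_mul]

theorem wordImg_letters (u : FreeSemigroup A) :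
    wordImg ψ (letters u) = (↑(ψ u) : WithOne T) := by
  induction u using FreeSemigroup.recOnMul with
  | ih1 a => simp [letters_of, wordImg_cons, wordImg_nil, letterImg]
  | ih2 x y hx hy =>
    rw [letters_mul, wordImg_append, hx, hy, map_mul, WithOne.coe_mul]

/-- Characterization of reachability in the two-sided Cayley graph. -/
theorem reflTransGen_krStep_iff (v w : KRVtx T) :
    Relation.ReflTransGen (KRStep ψ) v w ↔
      ∃ l : List A, v.1 * wordImg ψ l = w.1 ∧ v.2 = wordImg ψ l * w.2 := by
  constructor
  · intro hrel
    induction hrel with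
    | refl => exact ⟨[], by simp [wordImg_nil]⟩
    | tail _ hstep ih =>
      obtain ⟨l, h1, h2⟩ := ih
      obtain ⟨a, ha1, ha2⟩ := hstep
      refine ⟨l ++ [a], ?_, ?_⟩
      · rw [wordImg_append, ← mul_assoc, h1, wordImg_cons, wordImg_nil, mul_one, ha1]
      · rw [h2, ha2, wordImg_append, wordImg_cons, wordImg_nil, mul_one, mul_assoc]
  · rintro ⟨l, h1, h2⟩
    induction l generalizing v with
    | nil =>
      rw [wordImg_nil, mul_one] at h1
      rw [wordImg_nil, one_mul] at h2
      rw [show v = w from Prod.ext h1 h2]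
    | cons a l ih =>
      refine Relation.ReflTransGen.head (b := (v.1 * letterImg ψ a, wordImg ψ l * w.2))
        ⟨a, rfl, ?_⟩ (ih _ ?_ rfl)
      · rw [h2, wordImg_cons, mul_assoc]
      · show v.1 * letterImg ψ a * wordImg ψ l = w.1
        rw [mul_assoc, ← wordImg_cons, h1]

/-- Reachability from the target of an edge back to its source. -/
def CanReturn (e : KREdge A T) : Prop :=
  Relation.ReflTransGen (KRStep ψ) e.2.2 e.1

theorem isTransEdge_iff (e : KREdge A T) :
    IsTransEdge ψ e ↔ IsKREdge ψ e ∧ ¬ CanReturn ψ e := Iff.rfl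

/-- Right translation of an edge by an element of `T^I`. -/
def rtE (x : WithOne T) (e : KREdge A T) : KREdge A T :=
  ((e.1.1, e.1.2 * x), e.2.1, (e.2.2.1, e.2.2.2 * x))

/-- Left translation of an edge by an element of `T^I`. -/
def ltE (x : WithOne T) (e : KREdge A T) : KREdge A T :=
  ((x * e.1.1, e.1.2), e.2.1, (x * e.2.2.1, e.2.2.2))

theorem canReturn_rtE {e : KREdge A T} (x : WithOne T) (h : CanReturn ψ e) :
    CanReturn ψ (rtE x e) := by
  rw [CanReturn, reflTransGen_krStep_iff] at h ⊢
  obtain ⟨l, h1, h2⟩ := h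
  exact ⟨l, h1, by simpa [rtE, mul_assoc] using congrArg (· * x) h2⟩

theorem canReturn_ltE {e : KREdge A T} (x : WithOne T) (h : CanReturn ψ e) :
    CanReturn ψ (ltE x e) := by
  rw [CanReturn, reflTransGen_krStep_iff] at h ⊢
  obtain ⟨l, h1, h2⟩ := h
  exact ⟨l, by simpa [ltE, mul_assoc] using congrArg (x * ·) h1, h2⟩

theorem isTransEdge_of_rtE {e : KREdge A T} {x : WithOne T}
    (hKR : IsKREdge ψ e) (h : IsTransEdge ψ (rtE x e)) : IsTransEdge ψ e :=
  ⟨hKR, fun hc => h.2 (canReturn_rtE ψ x hc)⟩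

theorem isTransEdge_of_ltE {e : KREdge A T} {x : WithOne T}
    (hKR : IsKREdge ψ e) (h : IsTransEdge ψ (ltE x e)) : IsTransEdge ψ e :=
  ⟨hKR, fun hc => h.2 (canReturn_ltE ψ x hc)⟩

theorem isKREdge_of_mem_pathEdges {u : FreeSemigroup A} {e : KREdge A T}
    (h : e ∈ pathEdges ψ u) : IsKREdge ψ e := by
  obtain ⟨w₁, w₂, a, -, rfl⟩ := h
  constructor
  · show wordImg ψ w₁ * letterImg ψ a = wordImg ψ (w₁ ++ [a])
    rw [wordImg_append, wordImg_cons, wordImg_nil, mul_one]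
  · show wordImg ψ (a :: w₂) = letterImg ψ a * wordImg ψ w₂
    rw [wordImg_cons]

theorem pathEdges_mul (u v : FreeSemigroup A) :
    pathEdges ψ (u * v) =
      rtE (↑(ψ v)) '' pathEdges ψ u ∪ ltE (↑(ψ u)) '' pathEdges ψ v := by
  ext e
  constructor
  · rintro ⟨w₁, w₂, a, hsplit, rfl⟩
    rw [letters_mul] at hsplit
    rcases List.append_eq_append_iff.mp hsplit with ⟨w₁', hw₁, hv⟩ | ⟨c', hu, hc⟩
    · -- edge inside v
      refine Or.inr ⟨_, ⟨w₁', w₂, a, hv, rfl⟩, ?_⟩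
      have h1 : wordImg ψ w₁ = ↑(ψ u) * wordImg ψ w₁' := by
        rw [hw₁, wordImg_append, wordImg_letters]
      have h2 : wordImg ψ (w₁ ++ [a]) = ↑(ψ u) * wordImg ψ (w₁' ++ [a]) := by
        rw [hw₁, List.append_assoc, wordImg_append, wordImg_letters]
      simp [ltE, h1, h2]
    · -- split point inside u or at the border
      cases c' with
      | nil =>
        simp only [List.append_nil] at hu
        rcases hc with hc
        refine Or.inr ⟨_, ⟨[], w₂, a, by simpa using hc.symm, rfl⟩, ?_⟩
        have h1 : wordImg ψ w₁ = ↑(ψ u) * wordImg ψ ([] : List A) := by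
          rw [← hu, wordImg_letters, wordImg_nil, mul_one]
        have h2 : wordImg ψ (w₁ ++ [a]) = ↑(ψ u) * wordImg ψ ([] ++ [a]) := by
          rw [← hu, wordImg_append, wordImg_letters, List.nil_append]
        simp [ltE, h1, h2]
      | cons b w₂' =>
        have hb : b = a := by
          have := congrArg (fun l => l.head?) hc
          simpa using this.symm
        subst hb
        have hw₂ : w₂ = w₂' ++ letters v := by
          have := congrArg List.tail hc
          simpa using this
        refine Or.inl ⟨_, ⟨w₁, w₂', b, hu, rfl⟩, ?_⟩
        have h1 : wordImg ψ (b :: w₂) = wordImg ψ (b :: w₂') * ↑(ψ v) := by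
          rw [hw₂, ← List.cons_append, wordImg_append, wordImg_letters]
        have h2 : wordImg ψ w₂ = wordImg ψ w₂' * ↑(ψ v) := by
          rw [hw₂, wordImg_append, wordImg_letters]
        simp [rtE, h1, h2]
  · rintro (⟨e₀, ⟨w₁, w₂, a, hsplit, rfl⟩, rfl⟩ | ⟨e₀, ⟨w₁, w₂, a, hsplit, rfl⟩, rfl⟩)
    · refine ⟨w₁, w₂ ++ letters v, a, ?_, ?_⟩
      · rw [letters_mul, hsplit]; simp
      · have h1 : wordImg ψ (a :: (w₂ ++ letters v)) = wordImg ψ (a :: w₂) * ↑(ψ v) := by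
          rw [← List.cons_append, wordImg_append, wordImg_letters]
        have h2 : wordImg ψ (w₂ ++ letters v) = wordImg ψ w₂ * ↑(ψ v) := by
          rw [wordImg_append, wordImg_letters]
        simp [rtE, h1, h2]
    · refine ⟨letters u ++ w₁, w₂, a, ?_, ?_⟩
      · rw [letters_mul, hsplit]; simp
      · have h1 : wordImg ψ (letters u ++ w₁) = ↑(ψ u) * wordImg ψ w₁ := by
          rw [wordImg_append, wordImg_letters]
        have h2 : wordImg ψ (letters u ++ (w₁ ++ [a])) = ↑(ψ u) * wordImg ψ (w₁ ++ [a]) := by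
          rw [wordImg_append, wordImg_letters]
        simp [ltE, h1, h2, List.append_assoc]

theorem transEdges_mul (u v : FreeSemigroup A) :
    transEdges ψ (u * v) =
      {e | (∃ e₀ ∈ transEdges ψ u, e = rtE (↑(ψ v)) e₀) ∧ IsTransEdge ψ e} ∪
      {e | (∃ e₀ ∈ transEdges ψ v, e = ltE (↑(ψ u)) e₀) ∧ IsTransEdge ψ e} := by
  ext e
  constructor
  · rintro ⟨hp, ht⟩
    rw [pathEdges_mul] at hp
    rcases hp with ⟨e₀, he₀, rfl⟩ | ⟨e₀, he₀, rfl⟩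
    · exact Or.inl ⟨⟨e₀, ⟨he₀, isTransEdge_of_rtE ψ (isKREdge_of_mem_pathEdges ψ he₀) ht⟩,
        rfl⟩, ht⟩
    · exact Or.inr ⟨⟨e₀, ⟨he₀, isTransEdge_of_ltE ψ (isKREdge_of_mem_pathEdges ψ he₀) ht⟩,
        rfl⟩, ht⟩
  · rintro (⟨⟨e₀, ⟨hp₀, -⟩, rfl⟩, ht⟩ | ⟨⟨e₀, ⟨hp₀, -⟩, rfl⟩, ht⟩)
    · exact ⟨by rw [pathEdges_mul]; exact Or.inl ⟨e₀, hp₀, rfl⟩, ht⟩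
    · exact ⟨by rw [pathEdges_mul]; exact Or.inr ⟨e₀, hp₀, rfl⟩, ht⟩

end KRCombinatorics

section KRConstruction

open FreeSemigroup

/-- Auxiliary carrier for the Karnofsky–Rhodes expansion: an element of `T` together
with a set of edges. -/
structure KRAux (A T : Type) : Type where
  t : T
  E : Set (KREdge A T)

variable {A T : Type} [Semigroup T] (ψ : FreeSemigroup A →ₙ* T)

/-- The multiplication of KR data. -/
def krMul (x y : KRAux A T) : KRAux A T :=
  ⟨x.t * y.t,
    {e | (∃ e₀ ∈ x.E, e = rtE (↑y.t) e₀) ∧ IsTransEdge ψ e} ∪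
    {e | (∃ e₀ ∈ y.E, e = ltE (↑x.t) e₀) ∧ IsTransEdge ψ e}⟩

/-- The invariant of a word: its image and its set of transition edges. -/
def krTheta (u : FreeSemigroup A) : KRAux A T := ⟨ψ u, transEdges ψ u⟩

theorem krTheta_mul (u v : FreeSemigroup A) :
    krTheta ψ (u * v) = krMul ψ (krTheta ψ u) (krTheta ψ v) := by
  unfold krTheta krMul
  exact congrArg₂ KRAux.mk (map_mul ψ u v) (transEdges_mul ψ u v)

/-- The concrete realization of the KR expansion: the image of `krTheta`. -/
def KRQ : Type := {x : KRAux A T // x ∈ Set.range (krTheta ψ)}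

instance : Mul (KRQ ψ) :=
  ⟨fun x y => ⟨krMul ψ x.1 y.1, by
    obtain ⟨u, hu⟩ := x.2
    obtain ⟨v, hv⟩ := y.2
    exact ⟨u * v, by rw [krTheta_mul, hu, hv]⟩⟩⟩

theorem KRQ.mul_def (x y : KRQ ψ) : (x * y).1 = krMul ψ x.1 y.1 := rfl

instance : Semigroup (KRQ ψ) where
  mul_assoc := by
    rintro ⟨_, u, rfl⟩ ⟨_, v, rfl⟩ ⟨_, w, rfl⟩
    apply Subtype.ext
    show krMul ψ (krMul ψ (krTheta ψ u) (krTheta ψ v)) (krTheta ψ w)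
      = krMul ψ (krTheta ψ u) (krMul ψ (krTheta ψ v) (krTheta ψ w))
    rw [← krTheta_mul, ← krTheta_mul, ← krTheta_mul, ← krTheta_mul, mul_assoc]

instance {X : Type} [Finite X] : Finite (WithOne X) := by
  haveI := Fintype.ofFinite X
  exact Finite.of_equiv (Option X) (Equiv.refl _)

instance {X : Type} [Finite X] : Finite (Set X) :=
  Finite.of_equiv (X → Prop) (Equiv.refl _)

instance [Finite A] [Finite T] : Finite (KRAux A T) :=
  Finite.of_equiv (T × Set (KREdge A T))
    ⟨fun p => ⟨p.1, p.2⟩, fun x => (x.t, x.E), fun _ => rfl, fun _ => rfl⟩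

instance [Finite A] [Finite T] : Finite (KRQ ψ) := Subtype.finite

variable [Finite A] [Finite T]

/-- The two-sided Karnofsky–Rhodes expansion exists. -/
noncomputable def krExp : KRExp ψ where
  K := KRQ ψ
  ψKR := ⟨fun u => ⟨krTheta ψ u, u, rfl⟩, fun u v => Subtype.ext (krTheta_mul ψ u v)⟩
  π := ⟨fun x => x.1.t, fun x y => rfl⟩
  surj := fun x => ⟨x.2.choose, Subtype.ext x.2.choose_spec⟩
  ker := by
    intro u v
    constructor
    · intro h
      have h' : krTheta ψ u = krTheta ψ v := congrArg Subtype.val h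
      exact ⟨congrArg KRAux.t h', congrArg KRAux.E h'⟩
    · rintro ⟨h1, h2⟩
      exact Subtype.ext (congrArg₂ KRAux.mk h1 h2)
  proj := rfl

end KRConstruction

section KRComparison

open FreeSemigroup

variable {A T A' T' : Type} [Semigroup T] [Semigroup T']
variable (ψ : FreeSemigroup A →ₙ* T) (ψ' : FreeSemigroup A' →ₙ* T')
variable (ι : T' →ₙ* T) (f : A' → A) (hf : ∀ a, ψ (of (f a)) = ι (ψ' (of a)))

/-- The induced map on edges. -/
def edgeMap (f : A' → A) (ι : T' →ₙ* T) (e : KREdge A' T') : KREdge A T :=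
  ((WithOne.map ι e.1.1, WithOne.map ι e.1.2), f e.2.1,
    (WithOne.map ι e.2.2.1, WithOne.map ι e.2.2.2))

include hf in
theorem letterImg_comm (a : A') :
    letterImg ψ (f a) = WithOne.map ι (letterImg ψ' a) := by
  rw [letterImg, hf, letterImg, WithOne.map_coe]

theorem withOneMap_mul (g : T' →ₙ* T) (x y : WithOne T') :
    WithOne.map g (x * y) = WithOne.map g x * WithOne.map g y := by
  have h : ∀ z, WithOne.map g z = WithOne.mapMulHom g z := fun z => by cases z <;> rfl
  rw [h, h, h, map_mul]

include hf in
theorem wordImg_comm (w : List A') :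
    wordImg ψ (w.map f) = WithOne.map ι (wordImg ψ' w) := by
  induction w with
  | nil => simp [wordImg_nil]
  | cons a l ih =>
    rw [List.map_cons, wordImg_cons, wordImg_cons, ih, letterImg_comm ψ ψ' ι f hf, withOneMap_mul ι]

include hf in
theorem psi_map_comm (u : FreeSemigroup A') :
    ψ (FreeSemigroup.map f u) = ι (ψ' u) := by
  induction u using FreeSemigroup.recOnMul with
  | ih1 a => rw [map_of, hf]
  | ih2 x y hx hy => rw [map_mul, map_mul, hx, hy, map_mul, map_mul]

theorem letters_map (u : FreeSemigroup A') :
    letters (FreeSemigroup.map f u) = (letters u).map f := by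
  induction u using FreeSemigroup.recOnMul with
  | ih1 a => rw [map_of]; rfl
  | ih2 x y hx hy =>
    rw [map_mul, letters_mul, letters_mul, hx, hy, List.map_append]

include hf in
theorem canReturn_map {e : KREdge A' T'} (h : CanReturn ψ' e) :
    CanReturn ψ (edgeMap f ι e) := by
  rw [CanReturn, reflTransGen_krStep_iff] at h ⊢
  obtain ⟨l, h1, h2⟩ := h
  refine ⟨l.map f, ?_, ?_⟩
  · show WithOne.map ι e.2.2.1 * wordImg ψ (l.map f) = WithOne.map ι e.1.1
    rw [wordImg_comm ψ ψ' ι f hf, ← withOneMap_mul ι, h1]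
  · show WithOne.map ι e.2.2.2 = wordImg ψ (l.map f) * WithOne.map ι e.1.2
    rw [wordImg_comm ψ ψ' ι f hf, ← withOneMap_mul ι, ← h2]

include hf in
theorem pathEdges_map (u : FreeSemigroup A') :
    pathEdges ψ (FreeSemigroup.map f u) = edgeMap f ι '' pathEdges ψ' u := by
  ext e
  constructor
  · rintro ⟨W₁, W₂, b, hsplit, rfl⟩
    rw [letters_map f, List.map_eq_append_iff] at hsplit
    obtain ⟨l₁, l₂, hu, hW₁, hl₂⟩ := hsplit
    cases l₂ with
    | nil => simp at hl₂
    | cons a w₂ =>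
      rw [List.map_cons, List.cons.injEq] at hl₂
      obtain ⟨hb, hW₂⟩ := hl₂
      refine ⟨_, ⟨l₁, w₂, a, hu, rfl⟩, ?_⟩
      have h1 : wordImg ψ W₁ = WithOne.map ι (wordImg ψ' l₁) := by
        rw [← hW₁, wordImg_comm ψ ψ' ι f hf]
      have h2 : wordImg ψ (b :: W₂) = WithOne.map ι (wordImg ψ' (a :: w₂)) := by
        rw [← hb, ← hW₂, ← List.map_cons, wordImg_comm ψ ψ' ι f hf]
      have h3 : wordImg ψ (W₁ ++ [b]) = WithOne.map ι (wordImg ψ' (l₁ ++ [a])) := by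
        rw [← hW₁, ← hb, show List.map f l₁ ++ [f a] = List.map f (l₁ ++ [a]) by simp,
          wordImg_comm ψ ψ' ι f hf]
      have h4 : wordImg ψ W₂ = WithOne.map ι (wordImg ψ' w₂) := by
        rw [← hW₂, wordImg_comm ψ ψ' ι f hf]
      simp [edgeMap, h1, h2, h3, h4, hb]
  · rintro ⟨e₀, ⟨w₁, w₂, a, hsplit, rfl⟩, rfl⟩
    refine ⟨w₁.map f, w₂.map f, f a, ?_, ?_⟩
    · rw [letters_map f, hsplit]; simp
    · have h1 := wordImg_comm ψ ψ' ι f hf w₁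
      have h2 : wordImg ψ (f a :: w₂.map f) = WithOne.map ι (wordImg ψ' (a :: w₂)) := by
        rw [← List.map_cons, wordImg_comm ψ ψ' ι f hf]
      have h3 : wordImg ψ (w₁.map f ++ [f a]) = WithOne.map ι (wordImg ψ' (w₁ ++ [a])) := by
        rw [show List.map f w₁ ++ [f a] = List.map f (w₁ ++ [a]) by simp,
          wordImg_comm ψ ψ' ι f hf]
      have h4 := wordImg_comm ψ ψ' ι f hf w₂
      simp [edgeMap, h1, h2, h3, h4]

include hf in
theorem transEdges_map (u : FreeSemigroup A') :
    transEdges ψ (FreeSemigroup.map f u) =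
      {x | (∃ e ∈ transEdges ψ' u, x = edgeMap f ι e) ∧ IsTransEdge ψ x} := by
  ext x
  constructor
  · rintro ⟨hp, ht⟩
    rw [pathEdges_map ψ ψ' ι f hf] at hp
    obtain ⟨e, he, rfl⟩ := hp
    refine ⟨⟨e, ⟨he, ⟨isKREdge_of_mem_pathEdges ψ' he, fun hc => ht.2 ?_⟩⟩, rfl⟩, ht⟩
    exact canReturn_map ψ ψ' ι f hf hc
  · rintro ⟨⟨e, ⟨hp, -⟩, rfl⟩, ht⟩
    exact ⟨by rw [pathEdges_map ψ ψ' ι f hf]; exact ⟨e, hp, rfl⟩, ht⟩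

variable (E : KRExp ψ) (E' : KRExp ψ')

include hf in
theorem psiKR_map_welldef {u v : FreeSemigroup A'} (h : E'.ψKR u = E'.ψKR v) :
    E.ψKR (FreeSemigroup.map f u) = E.ψKR (FreeSemigroup.map f v) := by
  rw [E'.ker] at h
  rw [E.ker]
  refine ⟨?_, ?_⟩
  · rw [psi_map_comm ψ ψ' ι f hf, psi_map_comm ψ ψ' ι f hf, h.1]
  · rw [transEdges_map ψ ψ' ι f hf, transEdges_map ψ ψ' ι f hf, h.2]

/-- The comparison homomorphism between KR expansions. -/
noncomputable def krEta : E'.K →ₙ* E.K where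
  toFun k := E.ψKR (FreeSemigroup.map f (Function.surjInv E'.surj k))
  map_mul' k₁ k₂ := by
    show E.ψKR (FreeSemigroup.map f (Function.surjInv E'.surj (k₁ * k₂)))
      = E.ψKR (FreeSemigroup.map f (Function.surjInv E'.surj k₁))
        * E.ψKR (FreeSemigroup.map f (Function.surjInv E'.surj k₂))
    have h : E'.ψKR (Function.surjInv E'.surj (k₁ * k₂))
        = E'.ψKR (Function.surjInv E'.surj k₁ * Function.surjInv E'.surj k₂) := by
      rw [map_mul, Function.surjInv_eq E'.surj k₁, Function.surjInv_eq E'.surj k₂,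
        Function.surjInv_eq E'.surj (k₁ * k₂)]
    rw [psiKR_map_welldef ψ ψ' ι f hf E E' h, map_mul, map_mul]

theorem krEta_psiKR (u : FreeSemigroup A') :
    krEta ψ ψ' ι f hf E E' (E'.ψKR u) = E.ψKR (FreeSemigroup.map f u) := by
  apply psiKR_map_welldef ψ ψ' ι f hf E E'
  exact Function.surjInv_eq E'.surj (E'.ψKR u)

theorem pi_krEta (k : E'.K) :
    E.π (krEta ψ ψ' ι f hf E E' k) = ι (E'.π k) := by
  obtain ⟨u, rfl⟩ := E'.surj k
  rw [krEta_psiKR]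
  have h1 : E.π (E.ψKR (FreeSemigroup.map f u)) = ψ (FreeSemigroup.map f u) :=
    DFunLike.congr_fun E.proj (FreeSemigroup.map f u)
  have h2 : E'.π (E'.ψKR u) = ψ' u := DFunLike.congr_fun E'.proj u
  rw [h1, h2, psi_map_comm ψ ψ' ι f hf]

end KRComparison

section ProVHelpers

theorem isOpen_disc {X : Type} (U : Set X) : @IsOpen X ⊥ U := by
  letI : TopologicalSpace X := ⊥
  haveI : DiscreteTopology X := ⟨rfl⟩
  exact isOpen_discrete U

theorem contDisc_of_fibers {S : Type} [TopologicalSpace S] {T : Type} {f : S → T}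
    (h : ∀ t : T, IsOpen (f ⁻¹' {t})) : ContinuousDisc f := by
  rw [ContinuousDisc, @continuous_def S T _ ⊥ f]
  intro U _
  have hU : f ⁻¹' U = ⋃ t ∈ U, f ⁻¹' {t} := by ext s; simp
  rw [hU]
  exact isOpen_biUnion fun t _ => h t

theorem contDisc_fiber {S : Type} [TopologicalSpace S] {T : Type} {f : S → T}
    (h : ContinuousDisc f) (t : T) : IsOpen (f ⁻¹' {t}) :=
  (@continuous_def S T _ ⊥ f).mp h {t} (isOpen_disc _)

theorem contDisc_comp {X Y T : Type} [tX : TopologicalSpace X] [tY : TopologicalSpace Y]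
    {g : Y → T} {f : X → Y} (hg : ContinuousDisc g) (hf : Continuous f) :
    ContinuousDisc (g ∘ f) := by
  letI : TopologicalSpace T := ⊥
  exact Continuous.comp hg hf

theorem contDisc_comp_bot {X Y T : Type} [tX : TopologicalSpace X]
    {g : Y → T} {f : X → Y} (hf : ContinuousDisc f) : ContinuousDisc (g ∘ f) := by
  letI : TopologicalSpace Y := ⊥
  letI : TopologicalSpace T := ⊥
  exact Continuous.comp continuous_bot hf

theorem V_mem_of_subsingleton (V : Pseudovariety) (T : Type) [Semigroup T]
    (hT : Subsingleton T) : V.Mem T := by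
  have htriv : V.Mem (∀ _ : Empty, PUnit) :=
    V.closed_prod Empty (fun _ => PUnit) (fun i => i.elim)
  refine V.closed_sub _ T ⟨fun _ _ => PUnit.unit, fun _ _ => rfl⟩ htriv ?_
  intro a b _
  exact hT.elim a b

/-- A finite continuous homomorphic image of a pro-`V` semigroup belongs to `V`. -/
theorem V_mem_of_contDisc_surj (V : Pseudovariety) (C : TopSgr) (hC : IsProV V C)
    (T : Type) [Semigroup T] [Finite T] (φ : C.carrier →ₙ* T)
    (hφc : ContinuousDisc ⇑φ) (hφs : Function.Surjective ⇑φ) : V.Mem T := by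
  obtain ⟨hcomp, -, -, hsep⟩ := hC
  by_cases hsub : ∀ c c' : C.carrier, φ c = φ c'
  · refine V_mem_of_subsingleton V T ⟨fun t t' => ?_⟩
    obtain ⟨c, rfl⟩ := hφs t
    obtain ⟨c', rfl⟩ := hφs t'
    exact hsub c c'
  · set D : Set (C.carrier × C.carrier) := {p | φ p.1 ≠ φ p.2} with hD
    let ι := {p : C.carrier × C.carrier // φ p.1 ≠ φ p.2}
    have hchoice : ∀ q : ι, ∃ (F : SgrIn V) (f : C.carrier →ₙ* F.carrier),
        ContinuousDisc ⇑f ∧ f q.1.1 ≠ f q.1.2 := by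
      intro q
      refine hsep q.1.1 q.1.2 fun hx => q.2 (by rw [hx])
    choose Fm fm hfc hfne using hchoice
    let U : ι → Set (C.carrier × C.carrier) :=
      fun q => (fm q ⁻¹' {fm q q.1.1}) ×ˢ (fm q ⁻¹' {fm q q.1.2})
    have hUopen : ∀ q, IsOpen (U q) :=
      fun q => (contDisc_fiber (hfc q) _).prod (contDisc_fiber (hfc q) _)
    have hcover : D ⊆ ⋃ q, U q := fun p hp =>
      Set.mem_iUnion.mpr ⟨⟨p, hp⟩, ⟨rfl, rfl⟩⟩
    have hDclosed : IsClosed D := by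
      rw [← isOpen_compl_iff]
      have hc : Dᶜ = ⋃ t : T, (φ ⁻¹' {t}) ×ˢ (φ ⁻¹' {t}) := by
        ext p
        simp only [hD, Set.mem_compl_iff, Set.mem_setOf_eq, not_not, Set.mem_iUnion,
          Set.mem_prod, Set.mem_preimage, Set.mem_singleton_iff]
        exact ⟨fun hp => ⟨φ p.2, hp, rfl⟩, fun ⟨t, h1, h2⟩ => h1.trans h2.symm⟩
      rw [hc]
      exact isOpen_iUnion fun t => (contDisc_fiber hφc t).prod (contDisc_fiber hφc t)
    haveI := hcomp
    have hDcomp : IsCompact D := hDclosed.isCompact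
    obtain ⟨s, hs⟩ := hDcomp.elim_finite_subcover U hUopen hcover
    have hFmem : V.Mem (∀ q : s, (Fm q).carrier) :=
      V.closed_prod s (fun q => (Fm q).carrier) (fun q => (Fm q).mem)
    let g : C.carrier →ₙ* (∀ q : s, (Fm q).carrier) :=
      ⟨fun c q => fm q c, fun x y => funext fun q => map_mul (fm (q : ι)) x y⟩
    have hkey : ∀ c c' : C.carrier, g c = g c' → φ c = φ c' := by
      intro c c' hg
      by_contra hne
      obtain ⟨q, hq, hmem⟩ := Set.mem_iUnion₂.mp (hs (show ((c, c') : C.carrier × C.carrier) ∈ D from hne))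
      obtain ⟨h1, h2⟩ := hmem
      apply hfne q
      have hc : fm q c = fm q c' := congrFun hg ⟨q, hq⟩
      rw [Set.mem_preimage, Set.mem_singleton_iff] at h1 h2
      rw [← h1, ← h2, hc]
    have hRmem : V.Mem ↥g.srange :=
      V.closed_sub _ _ (MulMemClass.subtype g.srange) hFmem Subtype.coe_injective
    have hex : ∀ r : ↥g.srange, ∃ c : C.carrier, g c = ↑r := fun r => r.2
    choose sec hsec using hex
    have hmulsec : ∀ r₁ r₂ : ↥g.srange, φ (sec (r₁ * r₂)) = φ (sec r₁) * φ (sec r₂) := by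
      intro r₁ r₂
      have hg : g (sec (r₁ * r₂)) = g (sec r₁ * sec r₂) := by
        rw [map_mul, hsec, hsec, hsec]; rfl
      rw [hkey _ _ hg, map_mul]
    let θ : ↥g.srange →ₙ* T := ⟨fun r => φ (sec r), hmulsec⟩
    have hθs : Function.Surjective ⇑θ := by
      intro t
      obtain ⟨c, rfl⟩ := hφs t
      refine ⟨⟨g c, ⟨c, rfl⟩⟩, hkey _ _ (hsec ⟨g c, ⟨c, rfl⟩⟩)⟩
    exact V.closed_hom _ T θ hRmem hθs

/-- A finite member of `V` with the discrete topology is pro-`V`. -/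
theorem isProV_disc (V : Pseudovariety) (F : Type) [Semigroup F] (hmem : V.Mem F) :
    IsProV V (discTopSgr F) := by
  haveI : Finite F := V.finite F hmem
  haveI : Finite (discTopSgr F).carrier := inferInstanceAs (Finite F)
  haveI : DiscreteTopology (discTopSgr F).carrier := ⟨rfl⟩
  refine ⟨Finite.compactSpace, inferInstance, inferInstance, ?_⟩
  intro x y hxy
  exact ⟨⟨F, hmem⟩, MulHom.id F, continuous_bot, hxy⟩

end ProVHelpers

/-- If `V` is closed under two-sided Karnofsky–Rhodes expansion, a
`V`-coproduct of pro-`V` KR-covers is a KR-cover. -/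
theorem coproduct_isKRCover (V : Pseudovariety) (hV : ClosedUnderKR V)
    {I : Type} [Nonempty I] (S : I → TopSgr) (hS : ∀ i, IsProV V (S i))
    (hcov : ∀ i, IsKRCover (S i))
    (C : TopSgr) (φ : ∀ i, (S i).carrier →ₙ* C.carrier) (h : IsCoproduct V S C φ) :
    IsKRCover C := by
  classical
  intro T _ _ hex
  refine ⟨hex, ?_⟩
  intro φ₀ hφ₀c hφ₀s
  -- the image `T` belongs to `V`
  have hTmem : V.Mem T := V_mem_of_contDisc_surj V C h.proV T φ₀ hφ₀c hφ₀s
  -- the canonical onto homomorphism `T⁺ → T` and its KR expansion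
  let ψ₀ : FreeSemigroup T →ₙ* T := FreeSemigroup.lift id
  have hψ₀s : Function.Surjective ⇑ψ₀ := fun t => ⟨FreeSemigroup.of t, rfl⟩
  let E₀ : KRExp ψ₀ := krExp ψ₀
  have hKmem : V.Mem E₀.K := hV T T hTmem ψ₀ hψ₀s E₀
  -- the family of induced maps to T
  let ρ : ∀ i, (S i).carrier →ₙ* T := fun i => φ₀.comp (φ i)
  have hρc : ∀ i, ContinuousDisc ⇑(ρ i) := fun i => contDisc_comp (g := ⇑φ₀) (f := ⇑(φ i)) hφ₀c (h.cont i)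
  -- each `S i` is a KR-cover of the image of `ρ i`; extract the data
  have hdata : ∀ i, ∃ (D : KRData ↥(ρ i).srange) (lm : (S i).carrier →ₙ* D.E.K),
      ContinuousDisc ⇑lm ∧ D.E.π.comp lm = (ρ i).srangeRestrict := by
    intro i
    have hc : ContinuousDisc ⇑(ρ i).srangeRestrict := by
      apply contDisc_of_fibers
      intro t
      have hfib : ⇑(ρ i).srangeRestrict ⁻¹' {t} = ⇑(ρ i) ⁻¹' {(t : T)} := by
        ext s
        simp only [Set.mem_preimage, Set.mem_singleton_iff, Subtype.ext_iff]
        rfl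
      rw [hfib]
      exact contDisc_fiber (hρc i) _
    have hsurj : Function.Surjective ⇑(ρ i).srangeRestrict :=
      MulHom.srangeRestrict_surjective _
    exact (hcov i ↥(ρ i).srange ⟨(ρ i).srangeRestrict, hc, hsurj⟩).2
      (ρ i).srangeRestrict hc hsurj
  choose Dd lam hlamc hlamπ using hdata
  -- comparison homomorphisms into the KR expansion of `ψ₀`
  let ι : ∀ i, ↥(ρ i).srange →ₙ* T := fun i => MulMemClass.subtype _
  let ff : ∀ i, (Dd i).A → T := fun i a => ((Dd i).ψ (FreeSemigroup.of a) : T)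
  have hff : ∀ i a, ψ₀ (FreeSemigroup.of (ff i a)) = ι i ((Dd i).ψ (FreeSemigroup.of a)) :=
    fun i a => rfl
  let η : ∀ i, (Dd i).E.K →ₙ* E₀.K :=
    fun i => krEta ψ₀ (Dd i).ψ (ι i) (ff i) (hff i) E₀ (Dd i).E
  let χ : ∀ i, (S i).carrier →ₙ* (discTopSgr E₀.K).carrier := fun i => (η i).comp (lam i)
  have hχc : ∀ i, Continuous ⇑(χ i) := fun i => contDisc_comp_bot (g := ⇑(η i)) (f := ⇑(lam i)) (hlamc i)
  -- the induced map from the coproduct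
  have hKpro : IsProV V (discTopSgr E₀.K) := isProV_disc V E₀.K hKmem
  obtain ⟨Ψ, ⟨hΨc, hΨcomp⟩, -⟩ := h.universal (discTopSgr E₀.K) hKpro χ hχc
  -- compatibility over T, via uniqueness
  have hTpro : IsProV V (discTopSgr T) := isProV_disc V T hTmem
  obtain ⟨Φ, -, hΦuniq⟩ :=
    h.universal (discTopSgr T) hTpro (fun i => ρ i) (fun i => hρc i)
  have hπχ : ∀ i s, E₀.π (χ i s) = ρ i s := by
    intro i s
    have h1 : E₀.π (η i (lam i s)) = ι i ((Dd i).E.π (lam i s)) :=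
      pi_krEta ψ₀ (Dd i).ψ (ι i) (ff i) (hff i) E₀ (Dd i).E (lam i s)
    have h2 : (Dd i).E.π (lam i s) = (ρ i).srangeRestrict s :=
      DFunLike.congr_fun (hlamπ i) s
    show E₀.π (η i (lam i s)) = ρ i s
    rw [h1, h2]
    rfl
  have h1 : E₀.π.comp Ψ = Φ := by
    refine hΦuniq _ ⟨contDisc_comp_bot (g := ⇑(E₀.π)) (f := ⇑Ψ) hΨc, fun i => ?_⟩
    refine MulHom.ext fun s => ?_
    have hs : Ψ (φ i s) = χ i s := DFunLike.congr_fun (hΨcomp i) s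
    show E₀.π (Ψ (φ i s)) = ρ i s
    rw [hs, hπχ i s]
  have h2 : (φ₀ : C.carrier →ₙ* (discTopSgr T).carrier) = Φ :=
    hΦuniq _ ⟨hφ₀c, fun i => rfl⟩
  refine ⟨{ A := T, ψ := ψ₀, surjψ := hψ₀s, E := E₀ }, Ψ, hΨc, ?_⟩
  rw [show (E₀ : KRExp ψ₀).π = ({ A := T, ψ := ψ₀, surjψ := hψ₀s, E := E₀ } :
    KRData T).E.π from rfl] at h1
  exact h1.trans h2.symm
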